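/- Singular perturbation estimate (Theorem on the relaxation limit of the layer dynamics, velocity bounds): under the stated hypotheses there exists a constant C > 0, depending only on N, C₀, T and c₀, such that ∫₀^T |η(t) − η_p(t)| dt ≤ (C/γ)(E_τ(0) + 1 − γ + τ); moreover, for every t₁ ∈ (0, T) there exists a constant C' > 0, depending only on N, C₀, T, c₀ and t₁, such that |η(t) − η_p(t)| ≤ (C'/γ)(E_τ(0) + 1 − γ + τ) for every t ∈ [t₁, T]. -/

import Mathlib

open MeasureTheory

open Filter Set Topology Asymptotics

lemma slope_norm_aux {E : Type*} [NormedAddCommGroup E] [NormedSpace ℝ E]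
    {f : ℝ → E} {a b x : ℝ} (hx : x ∈ Set.Ico a b)
    {f' r : E} {c : ℝ} (hc : 0 ≤ c)
    (hf : HasDerivWithinAt f f' (Set.Icc a b) x)
    (hdec : f' = -c • f x + r)
    {m : ℝ} (hm : -c * ‖f x‖ + ‖r‖ < m) :
    ∀ᶠ z in 𝓝[>] x, (z - x)⁻¹ * (‖f z‖ - ‖f x‖) < m := by
  have hle : 𝓝[>] x ≤ 𝓝[Set.Icc a b] x := by
    rw [← nhdsWithin_Ioc_eq_nhdsGT hx.2]
    exact nhdsWithin_mono _ (Set.Ioc_subset_Icc_self.trans (Set.Icc_subset_Icc hx.1 le_rfl))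
  have hO : (fun z => f z - f x - (z - x) • f') =o[𝓝[>] x] fun z => z - x :=
    (hasDerivWithinAt_iff_isLittleO.mp hf).mono hle
  set ε := (m - (-c * ‖f x‖ + ‖r‖)) / 2 with hε
  have hε0 : 0 < ε := by simp only [hε]; linarith
  have h1 : ∀ᶠ z in 𝓝[>] x, ‖f z - f x - (z - x) • f'‖ ≤ ε * ‖z - x‖ := hO.bound hε0
  have hcpos : (0:ℝ) < c + 1 := by linarith
  have h2 : ∀ᶠ z in 𝓝[>] x, z ∈ Set.Ioo x (x + (c + 1)⁻¹) :=
    Ioo_mem_nhdsGT_of_mem ⟨le_rfl, lt_add_of_pos_right x (by positivity)⟩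
  filter_upwards [h1, h2] with z h1 h2
  obtain ⟨hzx, hzlt⟩ := h2
  have hs : 0 < z - x := by linarith
  have hsmall : z - x < (c + 1)⁻¹ := by linarith
  have hsc : (z - x) * c < 1 := by
    have h3 : (z - x) * (c + 1) < (c + 1)⁻¹ * (c + 1) := by nlinarith
    rw [inv_mul_cancel₀ (ne_of_gt hcpos)] at h3
    nlinarith
  have e1 : f x + (z - x) • f' = (1 - (z - x) * c) • f x + (z - x) • r := by
    rw [hdec]; module
  have key : ‖f z‖ ≤ (1 - (z - x) * c) * ‖f x‖ + (z - x) * ‖r‖ + ε * (z - x) := by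
    have c1 : ‖f z‖ ≤ ‖f x + (z - x) • f'‖ + ‖f z - (f x + (z - x) • f')‖ :=
      norm_le_insert' _ _
    have c2 : ‖f z - (f x + (z - x) • f')‖ ≤ ε * (z - x) := by
      have : f z - (f x + (z - x) • f') = f z - f x - (z - x) • f' := by abel
      rw [this]
      calc ‖f z - f x - (z - x) • f'‖ ≤ ε * ‖z - x‖ := h1
      _ = ε * (z - x) := by rw [Real.norm_eq_abs, abs_of_pos hs]
    have c3 : ‖f x + (z - x) • f'‖ ≤ (1 - (z - x) * c) * ‖f x‖ + (z - x) * ‖r‖ := by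
      rw [e1]
      calc ‖(1 - (z - x) * c) • f x + (z - x) • r‖
          ≤ ‖(1 - (z - x) * c) • f x‖ + ‖(z - x) • r‖ := norm_add_le _ _
        _ = |1 - (z - x) * c| * ‖f x‖ + |z - x| * ‖r‖ := by
            rw [norm_smul, norm_smul, Real.norm_eq_abs, Real.norm_eq_abs]
        _ = (1 - (z - x) * c) * ‖f x‖ + (z - x) * ‖r‖ := by
            rw [abs_of_nonneg (by linarith), abs_of_pos hs]
    linarith
  rw [inv_mul_lt_iff₀ hs]
  nlinarith [norm_nonneg (f x), norm_nonneg r]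


set_option maxHeartbeats 2000000 in
lemma master (N : ℕ) (C₀ T c₀ : ℝ) (hC₀ : 0 < C₀) (hT : 0 < T) (hc₀ : 0 < c₀)
    (τ γ : ℝ) (hτ : 0 < τ) (hγc : c₀ ≤ γ) (hγ1 : γ ≤ 1)
    (P : EuclideanSpace ℝ (Fin N) → EuclideanSpace ℝ (Fin N)) (hP : ContDiff ℝ 1 P)
    (hp h η : ℝ → EuclideanSpace ℝ (Fin N))
    (hhp : ∀ t ∈ Set.Icc (0 : ℝ) T, HasDerivWithinAt hp (P (hp t)) (Set.Icc 0 T) t)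
    (hh : ∀ t ∈ Set.Icc (0 : ℝ) T, HasDerivWithinAt h (η t) (Set.Icc 0 T) t)
    (hη : ∀ t ∈ Set.Icc (0 : ℝ) T,
      HasDerivWithinAt η (τ⁻¹ • (P (h t) - γ • η t)) (Set.Icc 0 T) t)
    (hPb : ∀ t ∈ Set.Icc (0 : ℝ) T, ‖P (hp t)‖ ≤ C₀)
    (hDb : ∀ t ∈ Set.Icc (0 : ℝ) T, ‖fderiv ℝ P (hp t)‖ ≤ C₀)
    (hLip : ∀ t ∈ Set.Icc (0 : ℝ) T, ∀ d : EuclideanSpace ℝ (Fin N),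
      ‖P (hp t + d) - P (hp t)‖ ≤ C₀ * ‖d‖) :
    ∀ t ∈ Set.Icc (0 : ℝ) T,
      ‖η t - P (hp t)‖ ≤ Real.exp (-(γ / τ) * t) * ‖η 0 - P (hp 0)‖ +
        (C₀ * (Real.exp (C₀ * T / c₀) * (2 + C₀)) / c₀ + C₀ + C₀ ^ 2) *
          ((γ * ‖h 0 - hp 0‖ + τ * ‖η 0 - P (hp 0)‖) + 1 - γ + τ) / γ := by
  have hγ : 0 < γ := lt_of_lt_of_le hc₀ hγc
  set e : ℝ → EuclideanSpace ℝ (Fin N) := fun t => h t - hp t with he_def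
  set fn : ℝ → EuclideanSpace ℝ (Fin N) := fun t => η t - P (hp t) with hfn_def
  set R : ℝ := (γ * ‖h 0 - hp 0‖ + τ * ‖η 0 - P (hp 0)‖) + 1 - γ + τ with hR_def
  have hR0 : 0 < R := by
    have := norm_nonneg (h 0 - hp 0); have := norm_nonneg (η 0 - P (hp 0))
    have : 0 ≤ γ * ‖h 0 - hp 0‖ := by positivity
    have : 0 ≤ τ * ‖η 0 - P (hp 0)‖ := by positivity
    simp only [hR_def]; linarith
  -- derivatives
  have hde : ∀ x ∈ Set.Icc (0:ℝ) T, HasDerivWithinAt e (fn x) (Set.Icc 0 T) x :=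
    fun x hx => (hh x hx).sub (hhp x hx)
  set rf : ℝ → EuclideanSpace ℝ (Fin N) := fun x =>
    τ⁻¹ • (P (h x) - γ • P (hp x)) - fderiv ℝ P (hp x) (P (hp x)) with hrf_def
  have hdfn : ∀ x ∈ Set.Icc (0:ℝ) T,
      HasDerivWithinAt fn (-(γ/τ) • fn x + rf x) (Set.Icc 0 T) x := by
    intro x hx
    have hDP : HasFDerivAt P (fderiv ℝ P (hp x)) (hp x) :=
      (hP.differentiable one_ne_zero (hp x)).hasFDerivAt
    have hcomp : HasDerivWithinAt (fun t => P (hp t))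
        (fderiv ℝ P (hp x) (P (hp x))) (Set.Icc 0 T) x :=
      hDP.comp_hasDerivWithinAt x (hhp x hx)
    have := (hη x hx).sub hcomp
    refine this.congr_deriv ?_
    simp only [hfn_def, hrf_def]
    simp only [smul_sub, smul_smul, neg_smul, div_eq_inv_mul]; abel
  -- bound on rf
  have hrfb : ∀ x ∈ Set.Icc (0:ℝ) T, τ * ‖rf x‖ ≤ C₀ * ‖e x‖ + ((1-γ)*C₀ + τ*C₀^2) := by
    intro x hx
    have h1 : ‖P (h x) - P (hp x)‖ ≤ C₀ * ‖e x‖ := by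
      have := hLip x hx (h x - hp x)
      simpa [he_def] using this
    have h2 : ‖fderiv ℝ P (hp x) (P (hp x))‖ ≤ C₀ * C₀ := by
      calc ‖fderiv ℝ P (hp x) (P (hp x))‖ ≤ ‖fderiv ℝ P (hp x)‖ * ‖P (hp x)‖ :=
            ContinuousLinearMap.le_opNorm _ _
        _ ≤ C₀ * C₀ := by
            apply mul_le_mul (hDb x hx) (hPb x hx) (norm_nonneg _)
            exact le_of_lt hC₀
    have h3 : P (h x) - γ • P (hp x) = (P (h x) - P (hp x)) + (1-γ) • P (hp x) := by
      module
    have h4 : ‖P (h x) - γ • P (hp x)‖ ≤ C₀ * ‖e x‖ + (1-γ)*C₀ := by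
      rw [h3]
      calc ‖(P (h x) - P (hp x)) + (1-γ) • P (hp x)‖
          ≤ ‖P (h x) - P (hp x)‖ + ‖(1-γ) • P (hp x)‖ := norm_add_le _ _
        _ ≤ C₀ * ‖e x‖ + (1-γ)*C₀ := by
            apply add_le_add h1
            rw [norm_smul, Real.norm_eq_abs, abs_of_nonneg (by linarith)]
            exact mul_le_mul_of_nonneg_left (hPb x hx) (by linarith)
    calc τ * ‖rf x‖ ≤ τ * (‖τ⁻¹ • (P (h x) - γ • P (hp x))‖ + ‖fderiv ℝ P (hp x) (P (hp x))‖) := by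
          apply mul_le_mul_of_nonneg_left _ hτ.le
          exact norm_sub_le _ _
      _ = ‖P (h x) - γ • P (hp x)‖ + τ * ‖fderiv ℝ P (hp x) (P (hp x))‖ := by
          rw [norm_smul, Real.norm_eq_abs, abs_of_pos (inv_pos.mpr hτ)]
          field_simp
      _ ≤ (C₀ * ‖e x‖ + (1-γ)*C₀) + τ * C₀^2 := by
          apply add_le_add h4
          have := mul_le_mul_of_nonneg_left h2 hτ.le
          nlinarith
      _ = C₀ * ‖e x‖ + ((1-γ)*C₀ + τ*C₀^2) := by ring
  
  -- continuity
  have he_c : ContinuousOn e (Set.Icc 0 T) := fun x hx => (hde x hx).continuousWithinAt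
  have hfn_c : ContinuousOn fn (Set.Icc 0 T) := fun x hx => (hdfn x hx).continuousWithinAt
  set B : ℝ := (1-γ)*C₀ + τ*C₀^2 with hB_def
  have hB0 : 0 ≤ B := by
    have : 0 ≤ (1-γ)*C₀ := by nlinarith
    have : 0 ≤ τ*C₀^2 := by positivity
    simp only [hB_def]; linarith
  set L : ℝ → ℝ := fun t => γ * ‖e t‖ + τ * ‖fn t‖ with hL_def
  have hL_c : ContinuousOn L (Set.Icc 0 T) :=
    (continuousOn_const.mul he_c.norm).add (continuousOn_const.mul hfn_c.norm)
  -- first Gronwall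
  have hgron1 : ∀ t ∈ Set.Icc (0:ℝ) T,
      L t ≤ gronwallBound (L 0) (C₀/γ) B (t - 0) := by
    apply le_gronwallBound_of_liminf_deriv_right_le (f' := fun x => τ * ‖rf x‖) hL_c
    · intro x hx rr hrr
      have hx' : x ∈ Set.Icc (0:ℝ) T := Set.mem_Icc_of_Ico hx
      set gap : ℝ := rr - τ * ‖rf x‖ with hgap_def
      have hgap : 0 < gap := by simp only [hgap_def]; linarith
      have A1 : ∀ᶠ z in 𝓝[>] x, (z - x)⁻¹ * (‖e z‖ - ‖e x‖) < ‖fn x‖ + gap/(2*γ) := by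
        apply slope_norm_aux hx le_rfl (hde x hx')
        · rw [neg_zero, zero_smul, zero_add]
        · rw [neg_zero, zero_mul, zero_add]
          have : 0 < gap/(2*γ) := by positivity
          linarith
      have A2 : ∀ᶠ z in 𝓝[>] x, (z - x)⁻¹ * (‖fn z‖ - ‖fn x‖) <
          (-(γ/τ) * ‖fn x‖ + ‖rf x‖) + gap/(2*τ) := by
        apply slope_norm_aux hx (by positivity) (hdfn x hx') rfl
        have : 0 < gap/(2*τ) := by positivity
        linarith
      apply Filter.Eventually.frequently
      filter_upwards [A1, A2, self_mem_nhdsWithin] with z hz1 hz2 hz3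
      have hzx : x < z := hz3
      have key : (z - x)⁻¹ * (L z - L x) =
          γ * ((z - x)⁻¹ * (‖e z‖ - ‖e x‖)) + τ * ((z - x)⁻¹ * (‖fn z‖ - ‖fn x‖)) := by
        simp only [hL_def]; ring
      rw [key]
      have c1 : γ * ((z - x)⁻¹ * (‖e z‖ - ‖e x‖)) < γ * (‖fn x‖ + gap/(2*γ)) :=
        mul_lt_mul_of_pos_left hz1 hγ
      have c2 : τ * ((z - x)⁻¹ * (‖fn z‖ - ‖fn x‖)) <
          τ * ((-(γ/τ) * ‖fn x‖ + ‖rf x‖) + gap/(2*τ)) :=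
        mul_lt_mul_of_pos_left hz2 hτ
      have expand : γ * (‖fn x‖ + gap/(2*γ)) +
          τ * ((-(γ/τ) * ‖fn x‖ + ‖rf x‖) + gap/(2*τ)) = τ * ‖rf x‖ + gap := by
        field_simp; ring
      linarith
    · exact le_rfl
    · intro x hx
      have hx' : x ∈ Set.Icc (0:ℝ) T := Set.mem_Icc_of_Ico hx
      have h1 := hrfb x hx'
      have h2 : C₀ * ‖e x‖ ≤ (C₀/γ) * L x := by
        simp only [hL_def]
        have : 0 ≤ τ * ‖fn x‖ := by positivity
        rw [div_mul_eq_mul_div, le_div_iff₀ hγ]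
        nlinarith [norm_nonneg (e x)]
      linarith
  -- bound gronwallBound
  set K₁ : ℝ := Real.exp (C₀ * T / c₀) * (2 + C₀) with hK₁_def
  have hLmax : ∀ t ∈ Set.Icc (0:ℝ) T, L t ≤ K₁ * R := by
    intro t ht
    have hKne : C₀/γ ≠ 0 := by positivity
    have hgb := hgron1 t ht
    rw [gronwallBound_of_K_ne_0 hKne] at hgb
    have hexp : Real.exp (C₀/γ * (t - 0)) ≤ Real.exp (C₀ * T / c₀) := by
      apply Real.exp_le_exp.mpr
      rw [sub_zero]
      have g1 : C₀/γ ≤ C₀/c₀ := by gcongr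
      calc C₀/γ * t ≤ C₀/c₀ * T := mul_le_mul g1 ht.2 ht.1 (by positivity)
        _ = C₀ * T / c₀ := by ring
    -- L 0 ≤ R and B/(C₀/γ) ≤ (1+C₀)*R
    have hL0R : L 0 ≤ R := by
      simp only [hL_def, hfn_def, he_def, hR_def]
      have : 0 ≤ 1 - γ := by linarith
      linarith
    have hBR : B ≤ (C₀ + C₀^2) * R := by
      have h1γ : 1 - γ ≤ R := by
        simp only [hR_def]
        have : 0 ≤ γ * ‖h 0 - hp 0‖ := by positivity
        have : 0 ≤ τ * ‖η 0 - P (hp 0)‖ := by positivity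
        linarith
      have hτR : τ ≤ R := by
        simp only [hR_def]
        have : 0 ≤ γ * ‖h 0 - hp 0‖ := by positivity
        have : 0 ≤ τ * ‖η 0 - P (hp 0)‖ := by positivity
        linarith
      simp only [hB_def]
      have e1 : (1-γ)*C₀ ≤ R * C₀ := by
        apply mul_le_mul_of_nonneg_right h1γ hC₀.le
      have e2 : τ*C₀^2 ≤ R*C₀^2 := by
        apply mul_le_mul_of_nonneg_right hτR (by positivity)
      have e3 : R*C₀ + R*C₀^2 = (C₀+C₀^2)*R := by ring
      linarith
    have hBK : B / (C₀/γ) ≤ (1 + C₀) * R := by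
      have hCγ : C₀ ≤ C₀ / γ := by
        rw [le_div_iff₀ hγ]
        calc C₀ * γ ≤ C₀ * 1 := mul_le_mul_of_nonneg_left hγ1 hC₀.le
          _ = C₀ := mul_one _
      rw [div_le_iff₀ (by positivity : (0:ℝ) < C₀/γ)]
      calc B ≤ (C₀ + C₀^2) * R := hBR
        _ = ((1+C₀)*R) * C₀ := by ring
        _ ≤ ((1+C₀)*R) * (C₀/γ) := by
            apply mul_le_mul_of_nonneg_left hCγ (by positivity)
    have hexp1 : 1 ≤ Real.exp (C₀ * T / c₀) := by
      apply Real.one_le_exp; positivity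
    have hexp0 : 0 < Real.exp (C₀/γ * (t-0)) := Real.exp_pos _
    have hL0' : 0 ≤ L 0 := by
      simp only [hL_def]; positivity
    calc L t ≤ L 0 * Real.exp (C₀/γ * (t-0)) + B/(C₀/γ) * (Real.exp (C₀/γ * (t-0)) - 1) := hgb
      _ ≤ R * Real.exp (C₀ * T / c₀) + (1+C₀)*R * Real.exp (C₀ * T / c₀) := by
          have d1 : L 0 * Real.exp (C₀/γ * (t-0)) ≤ R * Real.exp (C₀ * T / c₀) := by
            apply mul_le_mul hL0R hexp (Real.exp_pos _).le hR0.le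
          have d2 : B/(C₀/γ) * (Real.exp (C₀/γ * (t-0)) - 1) ≤
              (1+C₀)*R * Real.exp (C₀ * T / c₀) := by
            have hBK0 : 0 ≤ B/(C₀/γ) := by positivity
            calc B/(C₀/γ) * (Real.exp (C₀/γ * (t-0)) - 1) ≤
                B/(C₀/γ) * Real.exp (C₀ * T / c₀) := by
                  apply mul_le_mul_of_nonneg_left _ hBK0
                  linarith
              _ ≤ (1+C₀)*R * Real.exp (C₀ * T / c₀) := by
                  apply mul_le_mul_of_nonneg_right hBK (Real.exp_pos _).le
          linarith
      _ = K₁ * R := by simp only [hK₁_def]; ring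
  -- derive sup bound on ‖e‖
  have heb : ∀ t ∈ Set.Icc (0:ℝ) T, ‖e t‖ ≤ K₁ * R / γ := by
    intro t ht
    have := hLmax t ht
    simp only [hL_def] at this
    rw [le_div_iff₀ hγ]
    have : γ * ‖e t‖ ≤ K₁ * R := by
      have h0 : 0 ≤ τ * ‖fn t‖ := by positivity
      linarith
    linarith [this]
  -- second Gronwall on M = τ‖fn‖
  set Q : ℝ := C₀ * (K₁ * R / γ) + B with hQ_def
  set M : ℝ → ℝ := fun t => τ * ‖fn t‖ with hM_def
  have hM_c : ContinuousOn M (Set.Icc 0 T) := continuousOn_const.mul hfn_c.norm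
  have hgron2 : ∀ t ∈ Set.Icc (0:ℝ) T,
      M t ≤ gronwallBound (M 0) (-(γ/τ)) Q (t - 0) := by
    apply le_gronwallBound_of_liminf_deriv_right_le
      (f' := fun x => -γ * ‖fn x‖ + τ * ‖rf x‖) hM_c
    · intro x hx rr hrr
      have hx' : x ∈ Set.Icc (0:ℝ) T := Set.mem_Icc_of_Ico hx
      set gap : ℝ := rr - (-γ * ‖fn x‖ + τ * ‖rf x‖) with hgap_def
      have hgap : 0 < gap := by simp only [hgap_def]; linarith
      have A2 : ∀ᶠ z in 𝓝[>] x, (z - x)⁻¹ * (‖fn z‖ - ‖fn x‖) <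
          (-(γ/τ) * ‖fn x‖ + ‖rf x‖) + gap/τ := by
        apply slope_norm_aux hx (by positivity) (hdfn x hx') rfl
        have : 0 < gap/τ := by positivity
        linarith
      apply Filter.Eventually.frequently
      filter_upwards [A2] with z hz2
      have key : (z - x)⁻¹ * (M z - M x) = τ * ((z - x)⁻¹ * (‖fn z‖ - ‖fn x‖)) := by
        simp only [hM_def]; ring
      rw [key]
      have c2 : τ * ((z - x)⁻¹ * (‖fn z‖ - ‖fn x‖)) <
          τ * ((-(γ/τ) * ‖fn x‖ + ‖rf x‖) + gap/τ) := mul_lt_mul_of_pos_left hz2 hτ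
      have expand : τ * ((-(γ/τ) * ‖fn x‖ + ‖rf x‖) + gap/τ) =
          (-γ * ‖fn x‖ + τ * ‖rf x‖) + gap := by field_simp
      linarith
    · exact le_rfl
    · intro x hx
      have hx' : x ∈ Set.Icc (0:ℝ) T := Set.mem_Icc_of_Ico hx
      have h1 := hrfb x hx'
      have h2 : C₀ * ‖e x‖ ≤ C₀ * (K₁ * R / γ) :=
        mul_le_mul_of_nonneg_left (heb x hx') hC₀.le
      have h3 : -γ * ‖fn x‖ = -(γ/τ) * M x := by
        simp only [hM_def]; field_simp
      rw [h3]
      simp only [hQ_def]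
      linarith
  -- unpack second Gronwall
  intro t ht
  have hgb := hgron2 t ht
  have hKne : -(γ/τ) ≠ 0 := by
    have : 0 < γ/τ := by positivity
    intro hcon
    rw [neg_eq_zero] at hcon
    linarith
  rw [gronwallBound_of_K_ne_0 hKne] at hgb
  simp only [sub_zero] at hgb
  have hQ0 : 0 ≤ Q := by
    have : 0 ≤ C₀ * (K₁ * R / γ) := by
      have hK₁0 : 0 ≤ K₁ := by
        simp only [hK₁_def]; positivity
      positivity
    simp only [hQ_def]; linarith
  have hexp01 : Real.exp (-(γ/τ) * t) ≤ 1 := by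
    apply Real.exp_le_one_iff.mpr
    have : 0 ≤ γ/τ * t := by
      have := ht.1; positivity
    linarith
  have hexp0 : 0 < Real.exp (-(γ/τ) * t) := Real.exp_pos _
  have step1 : M t ≤ M 0 * Real.exp (-(γ/τ) * t) + Q * τ / γ := by
    have e1 : Q / -(γ/τ) * (Real.exp (-(γ/τ) * t) - 1) =
        Q * τ / γ * (1 - Real.exp (-(γ/τ) * t)) := by
      have gen : ∀ q x : ℝ, q / -(γ/τ) * (x - 1) = q * τ / γ * (1 - x) := by
        intro q x
        rw [div_neg, div_div_eq_mul_div]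
        ring
      exact gen Q _
    have e2 : Q * τ / γ * (1 - Real.exp (-(γ/τ) * t)) ≤ Q * τ / γ := by
      have hq : 0 ≤ Q * τ / γ := by positivity
      nlinarith
    calc M t ≤ M 0 * Real.exp (-(γ/τ) * t) + Q / -(γ/τ) * (Real.exp (-(γ/τ) * t) - 1) := hgb
      _ = M 0 * Real.exp (-(γ/τ) * t) + Q * τ / γ * (1 - Real.exp (-(γ/τ) * t)) := by rw [e1]
      _ ≤ M 0 * Real.exp (-(γ/τ) * t) + Q * τ / γ := by linarith
  -- divide by τ
  have step2 : ‖fn t‖ ≤ Real.exp (-(γ/τ) * t) * ‖fn 0‖ + Q / γ := by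
    have hMt : M t = τ * ‖fn t‖ := rfl
    have hM0 : M 0 = τ * ‖fn 0‖ := rfl
    rw [hMt, hM0] at step1
    have := (mul_le_mul_iff_right₀ hτ).mpr (le_refl (‖fn t‖))
    have key : τ * ‖fn t‖ ≤ τ * (Real.exp (-(γ/τ) * t) * ‖fn 0‖ + Q / γ) := by
      have e3 : τ * ‖fn 0‖ * Real.exp (-(γ/τ) * t) + Q * τ / γ =
          τ * (Real.exp (-(γ/τ) * t) * ‖fn 0‖ + Q / γ) := by field_simp
      linarith [step1, e3.symm.le]
    exact le_of_mul_le_mul_left key hτ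
  -- bound Q/γ by K₂ R / γ
  have hK₁0 : 0 ≤ K₁ := by simp only [hK₁_def]; positivity
  have hBR' : B ≤ (C₀ + C₀^2) * R := by
    have h1γ : 1 - γ ≤ R := by
      simp only [hR_def]
      have : 0 ≤ γ * ‖h 0 - hp 0‖ := by positivity
      have : 0 ≤ τ * ‖η 0 - P (hp 0)‖ := by positivity
      linarith
    have hτR : τ ≤ R := by
      simp only [hR_def]
      have : 0 ≤ γ * ‖h 0 - hp 0‖ := by positivity
      have : 0 ≤ τ * ‖η 0 - P (hp 0)‖ := by positivity
      linarith
    simp only [hB_def]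
    have e1 : (1-γ)*C₀ ≤ R * C₀ := mul_le_mul_of_nonneg_right h1γ hC₀.le
    have e2 : τ*C₀^2 ≤ R*C₀^2 := mul_le_mul_of_nonneg_right hτR (by positivity)
    have e3 : R*C₀ + R*C₀^2 = (C₀+C₀^2)*R := by ring
    linarith
  have hQK : Q ≤ (C₀ * K₁ / c₀ + C₀ + C₀^2) * R := by
    have d1 : C₀ * (K₁ * R / γ) ≤ C₀ * (K₁ * R / c₀) := by
      gcongr
    simp only [hQ_def]
    calc C₀ * (K₁ * R / γ) + B ≤ C₀ * (K₁ * R / c₀) + (C₀ + C₀^2) * R := add_le_add d1 hBR'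
      _ = (C₀ * K₁ / c₀ + C₀ + C₀^2) * R := by ring
  have final : Q / γ ≤ (C₀ * K₁ / c₀ + C₀ + C₀^2) * R / γ := by
    gcongr
  simp only [hK₁_def] at final
  calc ‖fn t‖ ≤ Real.exp (-(γ/τ) * t) * ‖fn 0‖ + Q / γ := step2
    _ ≤ Real.exp (-(γ/τ) * t) * ‖fn 0‖ +
        (C₀ * (Real.exp (C₀ * T / c₀) * (2 + C₀)) / c₀ + C₀ + C₀^2) * R / γ := by
      linarith



set_option maxHeartbeats 1000000 in
/-- Singular perturbation estimate (velocity bounds) for the relaxation limit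
of the layer dynamics: there is `C > 0` depending only on `N`, `C₀`, `T`, `c₀`
with `∫₀^T |η − η_p| ≤ (C/γ)(E_τ(0) + 1 − γ + τ)`, and for every `t₁ ∈ (0,T)`
there is `C' > 0` depending only on `N`, `C₀`, `T`, `c₀`, `t₁` with
`|η(t) − η_p(t)| ≤ (C'/γ)(E_τ(0) + 1 − γ + τ)` on `[t₁, T]`, where
`η_p = P ∘ h_p` and `E_τ(0) = γ|h(0) − h_p(0)| + τ|η(0) − η_p(0)|`. -/
theorem singular_perturbation_velocity_bounds
    (N : ℕ) (C₀ T c₀ : ℝ) (hC₀ : 0 < C₀) (hT : 0 < T) (hc₀ : 0 < c₀) :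
    (∃ C : ℝ, 0 < C ∧
      ∀ (τ γ : ℝ), 0 < τ → c₀ ≤ γ → γ ≤ 1 →
      ∀ (P : EuclideanSpace ℝ (Fin N) → EuclideanSpace ℝ (Fin N)),
        ContDiff ℝ 1 P →
      ∀ (hp h η : ℝ → EuclideanSpace ℝ (Fin N)),
        (∀ t ∈ Set.Icc (0 : ℝ) T,
          HasDerivWithinAt hp (P (hp t)) (Set.Icc 0 T) t) →
        (∀ t ∈ Set.Icc (0 : ℝ) T,
          HasDerivWithinAt h (η t) (Set.Icc 0 T) t) →
        (∀ t ∈ Set.Icc (0 : ℝ) T,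
          HasDerivWithinAt η (τ⁻¹ • (P (h t) - γ • η t)) (Set.Icc 0 T) t) →
        (∀ t ∈ Set.Icc (0 : ℝ) T, ‖P (hp t)‖ ≤ C₀) →
        (∀ t ∈ Set.Icc (0 : ℝ) T, ‖fderiv ℝ P (hp t)‖ ≤ C₀) →
        (∀ t ∈ Set.Icc (0 : ℝ) T, ∀ d : EuclideanSpace ℝ (Fin N),
          ‖P (hp t + d) - P (hp t)‖ ≤ C₀ * ‖d‖) →
        (∫ t in Set.Icc (0 : ℝ) T, ‖η t - P (hp t)‖) ≤
          (C / γ) * ((γ * ‖h 0 - hp 0‖ + τ * ‖η 0 - P (hp 0)‖) + 1 - γ + τ)) ∧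
    (∀ t₁ ∈ Set.Ioo (0 : ℝ) T, ∃ C' : ℝ, 0 < C' ∧
      ∀ (τ γ : ℝ), 0 < τ → c₀ ≤ γ → γ ≤ 1 →
      ∀ (P : EuclideanSpace ℝ (Fin N) → EuclideanSpace ℝ (Fin N)),
        ContDiff ℝ 1 P →
      ∀ (hp h η : ℝ → EuclideanSpace ℝ (Fin N)),
        (∀ t ∈ Set.Icc (0 : ℝ) T,
          HasDerivWithinAt hp (P (hp t)) (Set.Icc 0 T) t) →
        (∀ t ∈ Set.Icc (0 : ℝ) T,
          HasDerivWithinAt h (η t) (Set.Icc 0 T) t) →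
        (∀ t ∈ Set.Icc (0 : ℝ) T,
          HasDerivWithinAt η (τ⁻¹ • (P (h t) - γ • η t)) (Set.Icc 0 T) t) →
        (∀ t ∈ Set.Icc (0 : ℝ) T, ‖P (hp t)‖ ≤ C₀) →
        (∀ t ∈ Set.Icc (0 : ℝ) T, ‖fderiv ℝ P (hp t)‖ ≤ C₀) →
        (∀ t ∈ Set.Icc (0 : ℝ) T, ∀ d : EuclideanSpace ℝ (Fin N),
          ‖P (hp t + d) - P (hp t)‖ ≤ C₀ * ‖d‖) →
        ∀ t ∈ Set.Icc t₁ T,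
          ‖η t - P (hp t)‖ ≤
            (C' / γ) * ((γ * ‖h 0 - hp 0‖ + τ * ‖η 0 - P (hp 0)‖) + 1 - γ + τ)) := by
  set K₂ : ℝ := C₀ * (Real.exp (C₀ * T / c₀) * (2 + C₀)) / c₀ + C₀ + C₀ ^ 2 with hK₂_def
  have hK₂0 : 0 < K₂ := by simp only [hK₂_def]; positivity
  constructor
  · refine ⟨1 + T * K₂, by positivity, ?_⟩
    intro τ γ hτ hγc hγ1 P hP hp h η hhp hh hη hPb hDb hLip
    have hγ : 0 < γ := lt_of_lt_of_le hc₀ hγc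
    set R : ℝ := (γ * ‖h 0 - hp 0‖ + τ * ‖η 0 - P (hp 0)‖) + 1 - γ + τ with hR_def
    have hR0 : 0 < R := by
      have a1 : 0 ≤ γ * ‖h 0 - hp 0‖ := by positivity
      have a2 : 0 ≤ τ * ‖η 0 - P (hp 0)‖ := by positivity
      simp only [hR_def]; linarith
    have hb := master N C₀ T c₀ hC₀ hT hc₀ τ γ hτ hγc hγ1 P hP hp h η
      hhp hh hη hPb hDb hLip
    -- continuity of fn
    have hfn_c : ContinuousOn (fun t => ‖η t - P (hp t)‖) (Set.Icc (0:ℝ) T) := by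
      apply ContinuousOn.norm
      intro x hx
      have hDP : HasFDerivAt P (fderiv ℝ P (hp x)) (hp x) :=
        (hP.differentiable one_ne_zero (hp x)).hasFDerivAt
      exact ((hη x hx).sub (hDP.comp_hasDerivWithinAt x (hhp x hx))).continuousWithinAt
    set g : ℝ → ℝ := fun t => Real.exp (-(γ/τ) * t) * ‖η 0 - P (hp 0)‖ + K₂ * R / γ
      with hg_def
    have hg_cont : Continuous g := by
      apply Continuous.add
      · exact (Real.continuous_exp.comp (continuous_const.mul continuous_id)).mul
          continuous_const
      · exact continuous_const
    have hint1 : IntegrableOn (fun t => ‖η t - P (hp t)‖) (Set.Icc (0:ℝ) T) :=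
      hfn_c.integrableOn_compact isCompact_Icc
    have hint2 : IntegrableOn g (Set.Icc (0:ℝ) T) :=
      hg_cont.continuousOn.integrableOn_compact isCompact_Icc
    have hmono : (∫ t in Set.Icc (0:ℝ) T, ‖η t - P (hp t)‖) ≤ ∫ t in Set.Icc (0:ℝ) T, g t := by
      apply setIntegral_mono_on hint1 hint2 measurableSet_Icc
      intro x hx
      exact hb x hx
    -- compute ∫ g
    have hI : (∫ t in Set.Icc (0:ℝ) T, Real.exp (-(γ/τ) * t)) ≤ τ / γ := by
      have hIeq : (∫ t in Set.Icc (0:ℝ) T, Real.exp (-(γ/τ) * t)) =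
          ∫ t in (0:ℝ)..T, Real.exp (-(γ/τ) * t) := by
        rw [MeasureTheory.integral_Icc_eq_integral_Ioc,
          intervalIntegral.integral_of_le hT.le]
      have hderiv : ∀ t ∈ Set.uIcc (0:ℝ) T, HasDerivAt
          (fun t => -(τ/γ) * Real.exp (-(γ/τ) * t)) (Real.exp (-(γ/τ) * t)) t := by
        intro t _
        have h1 : HasDerivAt (fun t : ℝ => -(γ/τ) * t) (-(γ/τ)) t := by
          simpa using (hasDerivAt_id t).const_mul (-(γ/τ))
        have h2 := (h1.exp).const_mul (-(τ/γ))
        refine h2.congr_deriv ?_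
        have hγτ : τ / γ * (γ / τ) = 1 := by
          rw [div_mul_div_comm, mul_comm τ γ, div_self (by positivity)]
        rw [mul_comm (Real.exp _), ← mul_assoc, neg_mul_neg, hγτ, one_mul]
      have hcontexp : Continuous fun t : ℝ => Real.exp (-(γ/τ) * t) :=
        Real.continuous_exp.comp (continuous_const.mul continuous_id)
      have hftc := intervalIntegral.integral_eq_sub_of_hasDerivAt hderiv
        (hcontexp.intervalIntegrable 0 T)
      rw [hIeq, hftc]
      have hexppos : 0 < Real.exp (-(γ/τ) * T) := Real.exp_pos _
      have : -(τ/γ) * Real.exp (-(γ/τ) * T) ≤ 0 := by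
        apply mul_nonpos_of_nonpos_of_nonneg _ hexppos.le
        have : 0 < τ/γ := by positivity
        linarith
      simp only [mul_zero, neg_zero, Real.exp_zero, mul_one]
      linarith
    have hgsplit : (∫ t in Set.Icc (0:ℝ) T, g t) =
        (∫ t in Set.Icc (0:ℝ) T, Real.exp (-(γ/τ) * t)) * ‖η 0 - P (hp 0)‖ +
        (volume (Set.Icc (0:ℝ) T)).toReal * (K₂ * R / γ) := by
      simp only [hg_def]
      rw [MeasureTheory.integral_add _ (continuous_const.continuousOn.integrableOn_compact isCompact_Icc)]
      · rw [MeasureTheory.integral_mul_const, MeasureTheory.setIntegral_const]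
        simp [smul_eq_mul]
        exact Or.inl (by rw [ENNReal.toReal_ofReal hT.le, max_eq_left hT.le])
      · exact ((Real.continuous_exp.comp (continuous_const.mul continuous_id)).mul
          continuous_const).continuousOn.integrableOn_compact isCompact_Icc
    have hvol : (volume (Set.Icc (0:ℝ) T)).toReal = T := by
      rw [Real.volume_Icc]; simp [ENNReal.toReal_ofReal hT.le]
    have hτfn : τ * ‖η 0 - P (hp 0)‖ ≤ R := by
      have a1 : 0 ≤ γ * ‖h 0 - hp 0‖ := by positivity
      simp only [hR_def]; linarith
    calc (∫ t in Set.Icc (0:ℝ) T, ‖η t - P (hp t)‖) ≤ ∫ t in Set.Icc (0:ℝ) T, g t := hmono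
      _ = (∫ t in Set.Icc (0:ℝ) T, Real.exp (-(γ/τ) * t)) * ‖η 0 - P (hp 0)‖ +
          T * (K₂ * R / γ) := by rw [hgsplit, hvol]
      _ ≤ (τ/γ) * ‖η 0 - P (hp 0)‖ + T * (K₂ * R / γ) := by
          have := mul_le_mul_of_nonneg_right hI (norm_nonneg (η 0 - P (hp 0)))
          linarith
      _ ≤ R / γ + T * (K₂ * R / γ) := by
          have e1 : (τ/γ) * ‖η 0 - P (hp 0)‖ = (τ * ‖η 0 - P (hp 0)‖)/γ := by ring
          rw [e1]
          have e2 : (τ * ‖η 0 - P (hp 0)‖)/γ ≤ R/γ := by gcongr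
          linarith
      _ = ((1 + T * K₂) / γ) * R := by ring
  · intro t₁ ht₁
    obtain ⟨ht₁0, ht₁T⟩ := ht₁
    refine ⟨1/t₁ + K₂, by positivity, ?_⟩
    intro τ γ hτ hγc hγ1 P hP hp h η hhp hh hη hPb hDb hLip t ht
    have hγ : 0 < γ := lt_of_lt_of_le hc₀ hγc
    have ht' : t ∈ Set.Icc (0:ℝ) T := ⟨le_trans ht₁0.le ht.1, ht.2⟩
    have htpos : 0 < t := lt_of_lt_of_le ht₁0 ht.1
    set R : ℝ := (γ * ‖h 0 - hp 0‖ + τ * ‖η 0 - P (hp 0)‖) + 1 - γ + τ with hR_def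
    have hR0 : 0 < R := by
      have a1 : 0 ≤ γ * ‖h 0 - hp 0‖ := by positivity
      have a2 : 0 ≤ τ * ‖η 0 - P (hp 0)‖ := by positivity
      simp only [hR_def]; linarith
    have hb := master N C₀ T c₀ hC₀ hT hc₀ τ γ hτ hγc hγ1 P hP hp h η
      hhp hh hη hPb hDb hLip t ht'
    have hτfn : τ * ‖η 0 - P (hp 0)‖ ≤ R := by
      have a1 : 0 ≤ γ * ‖h 0 - hp 0‖ := by positivity
      simp only [hR_def]; linarith
    -- exp(-(γ/τ)t) ≤ τ/(γ t)
    have hexp : Real.exp (-(γ/τ) * t) ≤ τ/(γ*t) := by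
      have hx : 0 < γ/τ * t := by positivity
      have h1 : γ/τ * t ≤ Real.exp (γ/τ * t) := by
        have := Real.add_one_le_exp (γ/τ * t)
        linarith
      have h2 : Real.exp (-(γ/τ) * t) = (Real.exp (γ/τ * t))⁻¹ := by
        rw [← Real.exp_neg]; ring_nf
      rw [h2]
      have h3 : (Real.exp (γ/τ * t))⁻¹ ≤ (γ/τ * t)⁻¹ := by
        apply inv_anti₀ hx h1
      calc (Real.exp (γ/τ * t))⁻¹ ≤ (γ/τ * t)⁻¹ := h3
        _ = τ/(γ*t) := by field_simp
    have step : Real.exp (-(γ/τ) * t) * ‖η 0 - P (hp 0)‖ ≤ R/(γ*t₁) := by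
      calc Real.exp (-(γ/τ) * t) * ‖η 0 - P (hp 0)‖
          ≤ (τ/(γ*t)) * ‖η 0 - P (hp 0)‖ := by
            apply mul_le_mul_of_nonneg_right hexp (norm_nonneg _)
        _ = (τ * ‖η 0 - P (hp 0)‖)/(γ*t) := by ring
        _ ≤ R/(γ*t₁) := by
            apply div_le_div₀ hR0.le hτfn (mul_pos hγ ht₁0)
            apply mul_le_mul_of_nonneg_left ht.1 hγ.le
    calc ‖η t - P (hp t)‖ ≤ Real.exp (-(γ/τ) * t) * ‖η 0 - P (hp 0)‖ + K₂ * R / γ := hb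
      _ ≤ R/(γ*t₁) + K₂ * R / γ := by linarith
      _ = ((1/t₁ + K₂)/γ) * R := by
          field_simp
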